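/- (Vaughan's identity) Let U and V be real numbers with U > 1 and V > 1, and let k be a positive integer with k > U. Then Λ(k) = ∑_{dm = k, d ≤ V} μ(d)·log m − ∑_{dlm = k, d ≤ V, m ≤ U} μ(d)·Λ(m) − ∑_{dlm = k, d ≤ V, m > U, dl > V} μ(d)·Λ(m), where the first sum is over ordered pairs (d, m) of positive integers with dm = k and d ≤ V, and the last two sums are over ordered triples (d, l, m) of positive integers with dlm = k subject to the indicated constraints. -/

import Mathlib

open ArithmeticFunction Finset
open scoped ArithmeticFunction.Moebius

-- reindexing lemma
lemma reindex (k : ℕ) (hk : k ≠ 0) (F : ℕ → ℕ → ℕ → ℝ) :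
    ∑ x ∈ k.divisorsAntidiagonal, ∑ y ∈ x.2.divisorsAntidiagonal, F x.1 y.1 y.2
      = ∑ x ∈ k.divisorsAntidiagonal, ∑ y ∈ x.1.divisorsAntidiagonal, F y.1 y.2 x.2 := by
  rw [Finset.sum_sigma', Finset.sum_sigma']
  apply Finset.sum_nbij' (i := fun p => ⟨(p.1.1 * p.2.1, p.2.2), (p.1.1, p.2.1)⟩)
    (j := fun p => ⟨(p.2.1, p.2.2 * p.1.2), (p.2.2, p.1.2)⟩)
  · rintro ⟨⟨d, n⟩, ⟨l, m⟩⟩ h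
    simp only [Finset.mem_sigma, Nat.mem_divisorsAntidiagonal] at h ⊢
    obtain ⟨⟨h1, -⟩, h2, h3⟩ := h
    have hd : d ≠ 0 := by rintro rfl; rw [zero_mul] at h1; omega
    have hl : l ≠ 0 := by rintro rfl; rw [zero_mul] at h2; omega
    exact ⟨⟨by rw [mul_assoc, h2, h1], hk⟩, trivial, Nat.mul_ne_zero hd hl⟩
  · rintro ⟨⟨n, m⟩, ⟨d, l⟩⟩ h
    simp only [Finset.mem_sigma, Nat.mem_divisorsAntidiagonal] at h ⊢
    obtain ⟨⟨h1, -⟩, h2, h3⟩ := h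
    have hl : l ≠ 0 := by rintro rfl; rw [mul_zero] at h2; omega
    have hm : m ≠ 0 := by rintro rfl; rw [mul_zero] at h1; omega
    exact ⟨⟨by rw [← mul_assoc, h2, h1], hk⟩, trivial, Nat.mul_ne_zero hl hm⟩
  · rintro ⟨⟨d, n⟩, ⟨l, m⟩⟩ h
    simp only [Finset.mem_sigma, Nat.mem_divisorsAntidiagonal] at h
    obtain ⟨⟨h1, -⟩, h2, h3⟩ := h
    simp [h2]
  · rintro ⟨⟨n, m⟩, ⟨d, l⟩⟩ h
    simp only [Finset.mem_sigma, Nat.mem_divisorsAntidiagonal] at h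
    obtain ⟨⟨h1, -⟩, h2, h3⟩ := h
    simp [h2]
  · rintro ⟨⟨d, n⟩, ⟨l, m⟩⟩ h
    rfl

lemma sum_mu (n : ℕ) (hn : n ≠ 0) :
    (∑ x ∈ n.divisorsAntidiagonal, (μ x.1 : ℝ)) = if n = 1 then 1 else 0 := by
  have := congrArg (fun f : ArithmeticFunction ℝ => f n) (coe_moebius_mul_coe_zeta (R := ℝ))
  simp only [mul_apply, one_apply] at this
  rw [← this]
  apply Finset.sum_congr rfl
  intro x hx
  have hx2 : x.2 ≠ 0 := (Nat.ne_zero_of_mem_divisorsAntidiagonal hx).2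
  simp [natCoe_apply, ArithmeticFunction.zeta_apply, hx2]

theorem vaughan_identity (U V : ℝ) (hU : 1 < U) (hV : 1 < V) (k : ℕ)
    (hk : U < (k : ℝ)) :
    Λ k =
      (∑ x ∈ k.divisorsAntidiagonal,
        if (x.1 : ℝ) ≤ V then (μ x.1 : ℝ) * Real.log x.2 else 0)
      - (∑ x ∈ k.divisorsAntidiagonal, ∑ y ∈ x.2.divisorsAntidiagonal,
          if (x.1 : ℝ) ≤ V ∧ (y.2 : ℝ) ≤ U then (μ x.1 : ℝ) * Λ y.2 else 0)
      - (∑ x ∈ k.divisorsAntidiagonal, ∑ y ∈ x.2.divisorsAntidiagonal,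
          if (x.1 : ℝ) ≤ V ∧ U < (y.2 : ℝ) ∧ V < ((x.1 * y.1 : ℕ) : ℝ)
          then (μ x.1 : ℝ) * Λ y.2 else 0) := by
  have hk1 : (1 : ℝ) < k := hU.trans hk
  have hk0 : k ≠ 0 := by
    rintro rfl; norm_num at hk1
  -- Step 1: rewrite first sum as a double sum
  have hS1 : (∑ x ∈ k.divisorsAntidiagonal,
        if (x.1 : ℝ) ≤ V then (μ x.1 : ℝ) * Real.log x.2 else 0)
      = ∑ x ∈ k.divisorsAntidiagonal, ∑ y ∈ x.2.divisorsAntidiagonal,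
          (if (x.1 : ℝ) ≤ V then (μ x.1 : ℝ) * Λ y.2 else 0) := by
    refine Finset.sum_congr rfl fun x hx => ?_
    have hlog : Real.log x.2 = ∑ y ∈ x.2.divisorsAntidiagonal, Λ y.2 := by
      rw [Nat.sum_divisorsAntidiagonal' (f := fun _ i => Λ i), vonMangoldt_sum]
    split_ifs with h
    · rw [hlog, Finset.mul_sum]
    · simp
  rw [hS1, ← Finset.sum_sub_distrib, ← Finset.sum_sub_distrib]
  have hcomb : ∀ x ∈ k.divisorsAntidiagonal,
      ((∑ y ∈ x.2.divisorsAntidiagonal,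
          (if (x.1 : ℝ) ≤ V then (μ x.1 : ℝ) * Λ y.2 else 0))
        - ∑ y ∈ x.2.divisorsAntidiagonal,
          (if (x.1 : ℝ) ≤ V ∧ (y.2 : ℝ) ≤ U then (μ x.1 : ℝ) * Λ y.2 else 0))
        - ∑ y ∈ x.2.divisorsAntidiagonal,
          (if (x.1 : ℝ) ≤ V ∧ U < (y.2 : ℝ) ∧ V < ((x.1 * y.1 : ℕ) : ℝ)
            then (μ x.1 : ℝ) * Λ y.2 else 0)
      = ∑ y ∈ x.2.divisorsAntidiagonal,
          (if ((x.1 * y.1 : ℕ) : ℝ) ≤ V ∧ U < (y.2 : ℝ)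
            then (μ x.1 : ℝ) * Λ y.2 else 0) := by
    intro x hx
    rw [← Finset.sum_sub_distrib, ← Finset.sum_sub_distrib]
    refine Finset.sum_congr rfl fun y hy => ?_
    have hx2 : x.2 ≠ 0 := (Nat.ne_zero_of_mem_divisorsAntidiagonal hx).2
    have hy1 : 1 ≤ y.1 := Nat.one_le_iff_ne_zero.2
      (Nat.ne_zero_of_mem_divisorsAntidiagonal hy).1
    have hle : (x.1 : ℝ) ≤ ((x.1 * y.1 : ℕ) : ℝ) :=
      Nat.cast_le.2 (Nat.le_mul_of_pos_right _ (Nat.pos_of_ne_zero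
        (Nat.ne_zero_of_mem_divisorsAntidiagonal hy).1))
    simp only [ite_and]
    split_ifs <;> first | linarith | ring
  rw [Finset.sum_congr rfl hcomb,
    reindex k hk0 (fun d l m => if ((d * l : ℕ) : ℝ) ≤ V ∧ U < (m : ℝ)
      then (μ d : ℝ) * Λ m else 0)]
  have hsimp : ∀ x ∈ k.divisorsAntidiagonal,
      (∑ y ∈ x.1.divisorsAntidiagonal,
        if ((y.1 * y.2 : ℕ) : ℝ) ≤ V ∧ U < (x.2 : ℝ) then (μ y.1 : ℝ) * Λ x.2 else 0)
      = if (x.1 : ℝ) ≤ V ∧ U < (x.2 : ℝ)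
          then (∑ y ∈ x.1.divisorsAntidiagonal, (μ y.1 : ℝ)) * Λ x.2 else 0 := by
    intro x hx
    by_cases h : (x.1 : ℝ) ≤ V ∧ U < (x.2 : ℝ)
    · rw [if_pos h, Finset.sum_mul]
      refine Finset.sum_congr rfl fun y hy => ?_
      rw [(Nat.mem_divisorsAntidiagonal.mp hy).1, if_pos h]
    · rw [if_neg h]
      refine Finset.sum_eq_zero fun y hy => ?_
      rw [(Nat.mem_divisorsAntidiagonal.mp hy).1, if_neg h]
  rw [Finset.sum_congr rfl hsimp,
    Finset.sum_eq_single_of_mem (1, k) (by simp [Nat.mem_divisorsAntidiagonal, hk0])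
      (fun b hb hbne => ?_)]
  · have h1 : ((1 : ℕ) : ℝ) ≤ V := by exact_mod_cast hV.le
    rw [if_pos ⟨h1, hk⟩]
    simp
  · have hb0 : b.1 ≠ 0 := (Nat.ne_zero_of_mem_divisorsAntidiagonal hb).1
    have hb1 : b.1 ≠ 1 := by
      rintro h1
      apply hbne
      have := (Nat.mem_divisorsAntidiagonal.mp hb).1
      rw [h1, one_mul] at this
      exact Prod.ext h1 this
    simp [sum_mu b.1 hb0, hb1]
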